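/- Let k be a field and L ⊆ ℤ⁵ the subgroup generated by (1,1,0,−1,0) and (0,1,1,1,−1) (the lattice of principal divisors of the twice-iterated blow-up of ℙ², whose fan has rays ρ₁=(1,0), ρ₂=(1,1), ρ₃=(0,1), ρ₄=(−1,1), ρ₅=(0,−1) and maximal cones with ray index sets C = {{1,2},{2,3},{3,4},{4,5},{5,1}}). Let m = x₂ y₅ x₅⁻¹ y₂⁻¹ ∈ T be the monomial label of the extra vertex of the hyperplane arrangement. Then for every pair σ₁, σ₂ ∈ C there exists k₀ ∈ ℕ such that (x^σ̂₁ y^σ̂₂)^{k₀} · m ∈ M_{Λ(L)}, where x^σ̂ = ∏_{i∉σ} xᵢ and y^σ̂ = ∏_{i∉σ} yᵢ for σ ⊆ {1,…,5}. -/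
import Mathlib


/-!
STATEMENT 11: for the twice-iterated blow-up of `ℙ²`, with
`L = ⟨(1,1,0,−1,0), (0,1,1,1,−1)⟩ ⊆ ℤ⁵` and maximal-cone ray sets
`C = {{1,2},{2,3},{3,4},{4,5},{5,1}}` (0-indexed below), the monomial label
`m = x₂y₅x₅⁻¹y₂⁻¹` of the extra vertex satisfies: for all `σ₁, σ₂ ∈ C` there is
`k₀ ∈ ℕ` with `(x^σ̂₁ y^σ̂₂)^{k₀} · m ∈ M_{Λ(L)}`.
-/

noncomputable section

open MvPolynomial

/-- The Laurent polynomial ring `T = k[x₁^{±1},…,x₅^{±1},y₁^{±1},…,y₅^{±1}]`. -/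
abbrev LaurentT (k : Type*) [Field k] :=
  AddMonoidAlgebra k ((Fin 5 → ℤ) × (Fin 5 → ℤ))

/-- The polynomial ring `S = k[x₁,…,x₅,y₁,…,y₅]`; `Sum.inl i ↦ xᵢ₊₁`, `Sum.inr i ↦ yᵢ₊₁`. -/
abbrev PolyS (k : Type*) [Field k] := MvPolynomial (Fin 5 ⊕ Fin 5) k

/-- The natural inclusion `S → T`. -/
def incl (k : Type*) [Field k] : PolyS k →+* LaurentT k :=
  MvPolynomial.eval₂Hom (algebraMap k (LaurentT k))
    (Sum.elim
      (fun i => AddMonoidAlgebra.single (Pi.single i 1, 0) (1 : k))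
      (fun i => AddMonoidAlgebra.single (0, Pi.single i 1) (1 : k)))

/-- The lattice module `M_{Λ(L)} ⊆ T`. -/
def latticeModule (k : Type*) [Field k] (L : AddSubgroup (Fin 5 → ℤ)) :
    Submodule k (LaurentT k) :=
  Submodule.span k
    { t | ∃ (c d : Fin 5 → ℕ) (u : Fin 5 → ℤ), u ∈ L ∧
        t = AddMonoidAlgebra.single
          ((fun i => (c i : ℤ)) + u, (fun i => (d i : ℤ)) - u) (1 : k) }

/-- `x^σ̂ = ∏_{i ∉ σ} xᵢ ∈ S`. -/
def xhat (k : Type*) [Field k] (σ : Finset (Fin 5)) : PolyS k :=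
  ∏ i ∈ σᶜ, X (Sum.inl i)

/-- `y^σ̂ = ∏_{i ∉ σ} yᵢ ∈ S`. -/
def yhat (k : Type*) [Field k] (σ : Finset (Fin 5)) : PolyS k :=
  ∏ i ∈ σᶜ, X (Sum.inr i)

/-- The ray index sets (0-indexed) of the maximal cones of the fan of the
twice-iterated blow-up of `ℙ²`. -/
def maxCones : Finset (Finset (Fin 5)) := {{0, 1}, {1, 2}, {2, 3}, {3, 4}, {4, 0}}

/-- The monomial label `m = x₂ y₅ x₅⁻¹ y₂⁻¹ ∈ T` of the extra vertex. -/
def extraVertexLabel (k : Type*) [Field k] : LaurentT k :=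
  AddMonoidAlgebra.single
    (Pi.single (1 : Fin 5) (1 : ℤ) - Pi.single (4 : Fin 5) (1 : ℤ),
     Pi.single (4 : Fin 5) (1 : ℤ) - Pi.single (1 : Fin 5) (1 : ℤ)) (1 : k)

namespace LatticeAux

/-- pointwise value vector of `Pi.single 1 1 - Pi.single 4 1`. -/
def vv : Fin 5 → ℤ := ![0, 1, 0, 0, -1]

def gg1 : Fin 5 → ℤ := ![1, 1, 0, -1, 0]
def gg2 : Fin 5 → ℤ := ![0, 1, 1, 1, -1]

lemma vv_eq : (Pi.single (1 : Fin 5) (1 : ℤ) - Pi.single (4 : Fin 5) (1 : ℤ)) = vv := by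
  funext i
  fin_cases i <;> simp [vv, Pi.single_apply] <;> rfl

lemma mem_single {k : Type*} [Field k] (L : AddSubgroup (Fin 5 → ℤ))
    (e1 e2 u : Fin 5 → ℤ) (hu : u ∈ L)
    (h1 : ∀ i, 0 ≤ e1 i - u i) (h2 : ∀ i, 0 ≤ e2 i + u i) :
    AddMonoidAlgebra.single (e1, e2) (1 : k) ∈ latticeModule k L := by
  apply Submodule.subset_span
  refine ⟨fun i => (e1 i - u i).toNat, fun i => (e2 i + u i).toNat, u, hu, ?_⟩
  congr 1
  refine Prod.ext ?_ ?_ <;> funext i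
  · show e1 i = ((e1 i - u i).toNat : ℤ) + u i
    rw [Int.toNat_of_nonneg (h1 i)]; ring
  · show e2 i = ((e2 i + u i).toNat : ℤ) - u i
    rw [Int.toNat_of_nonneg (h2 i)]; ring

lemma incl_xhat {k : Type*} [Field k] (σ : Finset (Fin 5)) :
    incl k (xhat k σ) =
      AddMonoidAlgebra.single ((∑ i ∈ σᶜ, Pi.single i (1 : ℤ), 0)) (1 : k) := by
  unfold xhat incl
  rw [map_prod]
  have h : ∀ i ∈ σᶜ,
      (MvPolynomial.eval₂Hom (algebraMap k (LaurentT k))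
        (Sum.elim
          (fun i => AddMonoidAlgebra.single ((Pi.single i 1 : Fin 5 → ℤ), (0 : Fin 5 → ℤ)) (1 : k))
          (fun i => AddMonoidAlgebra.single ((0 : Fin 5 → ℤ), (Pi.single i 1 : Fin 5 → ℤ)) (1 : k))))
        (X (Sum.inl i)) =
      AddMonoidAlgebra.single ((Pi.single i 1 : Fin 5 → ℤ), (0 : Fin 5 → ℤ)) (1 : k) := by
    intro i _
    rw [eval₂Hom_X']
    rfl
  rw [Finset.prod_congr rfl h, AddMonoidAlgebra.prod_single]
  congr 1
  · refine Prod.ext ?_ ?_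
    · rw [Prod.fst_sum]
    · rw [Prod.snd_sum]; simp
  · simp

lemma incl_yhat {k : Type*} [Field k] (σ : Finset (Fin 5)) :
    incl k (yhat k σ) =
      AddMonoidAlgebra.single ((0, ∑ i ∈ σᶜ, Pi.single i (1 : ℤ))) (1 : k) := by
  unfold yhat incl
  rw [map_prod]
  have h : ∀ i ∈ σᶜ,
      (MvPolynomial.eval₂Hom (algebraMap k (LaurentT k))
        (Sum.elim
          (fun i => AddMonoidAlgebra.single ((Pi.single i 1 : Fin 5 → ℤ), (0 : Fin 5 → ℤ)) (1 : k))
          (fun i => AddMonoidAlgebra.single ((0 : Fin 5 → ℤ), (Pi.single i 1 : Fin 5 → ℤ)) (1 : k))))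
        (X (Sum.inr i)) =
      AddMonoidAlgebra.single ((0 : Fin 5 → ℤ), (Pi.single i 1 : Fin 5 → ℤ)) (1 : k) := by
    intro i _
    rw [eval₂Hom_X']
    rfl
  rw [Finset.prod_congr rfl h, AddMonoidAlgebra.prod_single]
  congr 1
  · refine Prod.ext ?_ ?_
    · rw [Prod.fst_sum]; simp
    · rw [Prod.snd_sum]
  · simp

lemma sum_single_apply (σ : Finset (Fin 5)) (i : Fin 5) :
    (∑ j ∈ σᶜ, Pi.single j (1 : ℤ)) i = if i ∈ σ then 0 else 1 := by
  rw [Finset.sum_apply]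
  simp only [Pi.single_apply]
  rw [Finset.sum_ite_eq σᶜ i fun _ => (1 : ℤ)]
  by_cases h : i ∈ σ <;> simp [h]

lemma key {k : Type*} [Field k] (σ₁ σ₂ : Finset (Fin 5)) (a b : ℤ)
    (h1 : ∀ i, a * gg1 i + b * gg2 i ≤ (if i ∈ σ₁ then 0 else 5) + vv i)
    (h2 : ∀ i, vv i ≤ (if i ∈ σ₂ then 0 else 5) + (a * gg1 i + b * gg2 i)) :
    ∃ k₀ : ℕ,
      incl k ((xhat k σ₁ * yhat k σ₂) ^ k₀) * extraVertexLabel k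
        ∈ latticeModule k
            (AddSubgroup.closure {![1, 1, 0, -1, 0], ![0, 1, 1, 1, -1]}) := by
  refine ⟨5, ?_⟩
  have hprod : incl k (xhat k σ₁ * yhat k σ₂) =
      AddMonoidAlgebra.single
        ((∑ i ∈ σ₁ᶜ, Pi.single i (1 : ℤ), ∑ i ∈ σ₂ᶜ, Pi.single i (1 : ℤ))) (1 : k) := by
    rw [map_mul, incl_xhat, incl_yhat, AddMonoidAlgebra.single_mul_single]
    simp
  rw [map_pow, hprod, AddMonoidAlgebra.single_pow, extraVertexLabel,
    AddMonoidAlgebra.single_mul_single, one_pow, one_mul]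
  set u : Fin 5 → ℤ := fun i => a * gg1 i + b * gg2 i with hu_def
  have humem : u ∈ AddSubgroup.closure {![1, 1, 0, -1, 0], ![0, 1, 1, 1, -1]} := by
    have : u = a • gg1 + b • gg2 := by
      funext i; simp [hu_def, smul_eq_mul]
    rw [this]
    refine AddSubgroup.add_mem _ ?_ ?_
    · exact AddSubgroup.zsmul_mem _ (AddSubgroup.subset_closure (by left; rfl)) a
    · exact AddSubgroup.zsmul_mem _ (AddSubgroup.subset_closure (by right; rfl)) b
  have hsmul : (5 : ℕ) • ((∑ i ∈ σ₁ᶜ, Pi.single i (1 : ℤ), ∑ i ∈ σ₂ᶜ, Pi.single i (1 : ℤ)))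
        + (Pi.single (1 : Fin 5) (1 : ℤ) - Pi.single (4 : Fin 5) (1 : ℤ),
           Pi.single (4 : Fin 5) (1 : ℤ) - Pi.single (1 : Fin 5) (1 : ℤ))
      = ((5 : ℕ) • (∑ i ∈ σ₁ᶜ, Pi.single i (1 : ℤ)) + vv,
         (5 : ℕ) • (∑ i ∈ σ₂ᶜ, Pi.single i (1 : ℤ)) - vv) := by
    rw [Prod.smul_mk]
    refine Prod.ext ?_ ?_
    · simp [vv_eq]
    · simp only [Prod.snd_add, Prod.mk_add_mk, Prod.snd]
      have : (Pi.single (4 : Fin 5) (1 : ℤ) - Pi.single (1 : Fin 5) (1 : ℤ)) = -vv := by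
        rw [← vv_eq]; abel
      rw [this]; abel
  rw [hsmul]
  refine mem_single _ _ _ u humem ?_ ?_
  · intro i
    have := h1 i
    have hui : u i = a * gg1 i + b * gg2 i := rfl
    have hs := sum_single_apply σ₁ i
    simp only [Pi.add_apply, Pi.smul_apply, hs]
    by_cases h : i ∈ σ₁ <;>
      simp only [h, if_true, if_false, nsmul_eq_mul, Nat.cast_ofNat, mul_zero, mul_one]
        at this ⊢ <;> omega
  · intro i
    have := h2 i
    have hui : u i = a * gg1 i + b * gg2 i := rfl
    have hs := sum_single_apply σ₂ i
    simp only [Pi.sub_apply, Pi.add_apply, Pi.smul_apply, hs]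
    by_cases h : i ∈ σ₂ <;>
      simp only [h, if_true, if_false, nsmul_eq_mul, Nat.cast_ofNat, mul_zero, mul_one]
        at this ⊢ <;> omega

end LatticeAux

theorem extra_vertex_label_torsion (k : Type*) [Field k] :
    ∀ σ₁ ∈ maxCones, ∀ σ₂ ∈ maxCones, ∃ k₀ : ℕ,
      incl k ((xhat k σ₁ * yhat k σ₂) ^ k₀) * extraVertexLabel k
        ∈ latticeModule k
            (AddSubgroup.closure {![1, 1, 0, -1, 0], ![0, 1, 1, 1, -1]}) := by
  intro σ₁ hσ₁ σ₂ hσ₂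
  fin_cases hσ₁ <;> fin_cases hσ₂ <;>
    first
      | exact LatticeAux.key _ _ 0 1 (by decide) (by decide)
      | exact LatticeAux.key _ _ (-1) 2 (by decide) (by decide)
      | exact LatticeAux.key _ _ (-2) 0 (by decide) (by decide)
      | exact LatticeAux.key _ _ (-2) (-2) (by decide) (by decide)
      | exact LatticeAux.key _ _ 0 (-2) (by decide) (by decide)
      | exact LatticeAux.key _ _ 1 0 (by decide) (by decide)
      | exact LatticeAux.key _ _ 0 0 (by decide) (by decide)
      | exact LatticeAux.key _ _ 1 1 (by decide) (by decide)
      | exact LatticeAux.key _ _ (-2) 1 (by decide) (by decide)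

end
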